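/- Let ({x̂_k},{f̂_k}) ∈ 𝒩 be a minimizer of J_y over 𝒩 with minimal value Ĵ = J_y({f̂_k},{x̂_k}) ≤ 1. Then {({x_k},{f_k}) ∈ 𝒩 : J_y({f_k},{x_k}) ≤ 1} = {({x̂_k + x_k},{f̂_k + f_k}) : ({x_k},{f_k}) ∈ 𝒩, J_0({f_k},{x_k}) ≤ 1 − Ĵ}. -/

import Mathlib

open Matrix

/-!  Index conventions.  The state sequence `x_0,…,x_{N+1}` is a function
`Fin (N+2) → Fin n → ℝ`.  The disturbance sequence `f_{-1},…,f_N` and the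
data `B_{-1},…,B_N`, `Q_{-1},…,Q_N` are shifted by one, so `f j`, `B j`,
`Q j` (for `j : Fin (N+2)`) stand for `f_{j-1}`, `B_{j-1}`, `Q_{j-1}`. -/

/-- The constraint set `𝒩` of pairs `({x_k}_{0}^{N+1}, {f_k}_{-1}^{N})` with
`F_{k+1} x_{k+1} - C_k x_k = B_k f_k` (k = 0,…,N) and `F_0 x_0 = B_{-1} f_{-1}`. -/
def NSet {N m n p : ℕ} (F : Fin (N + 2) → Matrix (Fin m) (Fin n) ℝ)
    (C : Fin (N + 1) → Matrix (Fin m) (Fin n) ℝ)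
    (B : Fin (N + 2) → Matrix (Fin m) (Fin p) ℝ) :
    Set ((Fin (N + 2) → Fin n → ℝ) × (Fin (N + 2) → Fin p → ℝ)) :=
  {xf | (∀ k : Fin (N + 1),
      F k.succ *ᵥ xf.1 k.succ - C k *ᵥ xf.1 k.castSucc = B k.succ *ᵥ xf.2 k.succ) ∧
    F 0 *ᵥ xf.1 0 = B 0 *ᵥ xf.2 0}

/-- The functional
`J_y({f},{x}) = Σ_{k=-1}^{N} (Q_k f_k, f_k) + Σ_{k=0}^{N} (R_k(y_k - H_k x_k), y_k - H_k x_k)`. -/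
def Jfun {N n p q : ℕ} (H : Fin (N + 1) → Matrix (Fin q) (Fin n) ℝ)
    (Q : Fin (N + 2) → Matrix (Fin p) (Fin p) ℝ)
    (R : Fin (N + 1) → Matrix (Fin q) (Fin q) ℝ)
    (y : Fin (N + 1) → Fin q → ℝ)
    (f : Fin (N + 2) → Fin p → ℝ) (x : Fin (N + 2) → Fin n → ℝ) : ℝ :=
  (∑ j : Fin (N + 2), (Q j *ᵥ f j) ⬝ᵥ f j) +
    ∑ k : Fin (N + 1),
      (R k *ᵥ (y k - H k *ᵥ x k.castSucc)) ⬝ᵥ (y k - H k *ᵥ x k.castSucc)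

/-- The a-posteriori set `G_y`. -/
def GSet {N m n p q : ℕ} (F : Fin (N + 2) → Matrix (Fin m) (Fin n) ℝ)
    (C : Fin (N + 1) → Matrix (Fin m) (Fin n) ℝ)
    (H : Fin (N + 1) → Matrix (Fin q) (Fin n) ℝ)
    (B : Fin (N + 2) → Matrix (Fin m) (Fin p) ℝ)
    (Q : Fin (N + 2) → Matrix (Fin p) (Fin p) ℝ)
    (R : Fin (N + 1) → Matrix (Fin q) (Fin q) ℝ)
    (y : Fin (N + 1) → Fin q → ℝ) : Set (Fin (N + 2) → Fin n → ℝ) :=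
  {x | ∃ f, (x, f) ∈ NSet F C B ∧ Jfun H Q R y f x ≤ 1}

/-- `ℓ({x_k}) = Σ_{k=0}^{N+1} (ℓ_k, x_k)`. -/
def lfun {N n : ℕ} (l : Fin (N + 2) → Fin n → ℝ) (x : Fin (N + 2) → Fin n → ℝ) : ℝ :=
  ∑ k : Fin (N + 2), l k ⬝ᵥ x k

/-- Membership of the family `{ℓ_k}_{0}^{N+1}` in the set `L`: there are
`z_k ∈ ℝ^m` and `u_k ∈ ℝ^q` with `ℓ_k = F_k' z_k - C_k' z_{k+1} + H_k' u_k`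
(k = 0,…,N) and `F_{N+1}' z_{N+1} = ℓ_{N+1}`. -/
def memL {N m n q : ℕ} (F : Fin (N + 2) → Matrix (Fin m) (Fin n) ℝ)
    (C : Fin (N + 1) → Matrix (Fin m) (Fin n) ℝ)
    (H : Fin (N + 1) → Matrix (Fin q) (Fin n) ℝ)
    (l : Fin (N + 2) → Fin n → ℝ) : Prop :=
  ∃ (z : Fin (N + 2) → Fin m → ℝ) (u : Fin (N + 1) → Fin q → ℝ),
    (∀ k : Fin (N + 1),
      l k.castSucc =
        (F k.castSucc)ᵀ *ᵥ z k.castSucc - (C k)ᵀ *ᵥ z k.succ + (H k)ᵀ *ᵥ u k) ∧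
    (F (Fin.last (N + 1)))ᵀ *ᵥ z (Fin.last (N + 1)) = l (Fin.last (N + 1))

/-- `lhat` is a minimax a-posteriori estimation of the linear function `lf` over `G`:
`sup_{x ∈ G} |lf x - lhat| = inf_{x̃ ∈ G} sup_{x ∈ G} |lf x - lf x̃|`
(suprema and infima taken in the extended reals). -/
def IsMinimaxEstimate {N n : ℕ} (G : Set (Fin (N + 2) → Fin n → ℝ))
    (lf : (Fin (N + 2) → Fin n → ℝ) → ℝ) (lhat : ℝ) : Prop :=
  (⨆ x ∈ G, (↑|lf x - lhat| : EReal)) =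
    ⨅ xt ∈ G, ⨆ x ∈ G, (↑|lf x - lf xt| : EReal)

/-! ### Auxiliary lemmas -/

lemma dot_sq_nonneg {k : ℕ} (M : Matrix (Fin k) (Fin k) ℝ) (hM : M.PosDef)
    (u : Fin k → ℝ) : 0 ≤ (M *ᵥ u) ⬝ᵥ u := by
  rw [dotProduct_comm]; simpa using hM.posSemidef.dotProduct_mulVec_nonneg u

lemma dot_symm {k : ℕ} (M : Matrix (Fin k) (Fin k) ℝ) (hM : Mᵀ = M)
    (u v : Fin k → ℝ) : (M *ᵥ u) ⬝ᵥ v = (M *ᵥ v) ⬝ᵥ u := by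
  rw [dotProduct_comm, dotProduct_mulVec, ← mulVec_transpose, hM]

lemma quad_add {k : ℕ} (M : Matrix (Fin k) (Fin k) ℝ) (hM : Mᵀ = M)
    (u v : Fin k → ℝ) :
    (M *ᵥ (u + v)) ⬝ᵥ (u + v)
      = (M *ᵥ u) ⬝ᵥ u + (M *ᵥ v) ⬝ᵥ v + 2 * ((M *ᵥ u) ⬝ᵥ v) := by
  rw [mulVec_add, add_dotProduct, dotProduct_add, dotProduct_add,
    dot_symm M hM v u]
  ring

lemma quad_sub {k : ℕ} (M : Matrix (Fin k) (Fin k) ℝ) (hM : Mᵀ = M)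
    (u v : Fin k → ℝ) :
    (M *ᵥ (u - v)) ⬝ᵥ (u - v)
      = (M *ᵥ u) ⬝ᵥ u + (M *ᵥ v) ⬝ᵥ v - 2 * ((M *ᵥ u) ⬝ᵥ v) := by
  have := quad_add M hM u (-v)
  simp only [mulVec_neg, dotProduct_neg, neg_dotProduct, neg_neg] at this
  rw [sub_eq_add_neg u v]
  rw [this]; ring

/-- `NSet` is closed under addition. -/
lemma NSet_add {N m n p : ℕ} {F : Fin (N + 2) → Matrix (Fin m) (Fin n) ℝ}
    {C : Fin (N + 1) → Matrix (Fin m) (Fin n) ℝ}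
    {B : Fin (N + 2) → Matrix (Fin m) (Fin p) ℝ}
    {a b : (Fin (N + 2) → Fin n → ℝ) × (Fin (N + 2) → Fin p → ℝ)}
    (ha : a ∈ NSet F C B) (hb : b ∈ NSet F C B) :
    (a.1 + b.1, a.2 + b.2) ∈ NSet F C B := by
  refine ⟨fun k => ?_, ?_⟩
  · simp only [Pi.add_apply, mulVec_add]
    rw [add_sub_add_comm, ha.1 k, hb.1 k]
  · simp only [Pi.add_apply, mulVec_add]
    rw [ha.2, hb.2]

/-- `NSet` is closed under scalar multiplication. -/
lemma NSet_smul {N m n p : ℕ} {F : Fin (N + 2) → Matrix (Fin m) (Fin n) ℝ}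
    {C : Fin (N + 1) → Matrix (Fin m) (Fin n) ℝ}
    {B : Fin (N + 2) → Matrix (Fin m) (Fin p) ℝ}
    {a : (Fin (N + 2) → Fin n → ℝ) × (Fin (N + 2) → Fin p → ℝ)} (t : ℝ)
    (ha : a ∈ NSet F C B) :
    (t • a.1, t • a.2) ∈ NSet F C B := by
  refine ⟨fun k => ?_, ?_⟩
  · simp only [Pi.smul_apply, mulVec_smul]
    rw [← smul_sub, ha.1 k]
  · simp only [Pi.smul_apply, mulVec_smul]
    rw [ha.2]

/-- The linear cross term in the expansion of `J_y(fh+f, xh+x)`. -/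
def Lterm {N n p q : ℕ} (H : Fin (N + 1) → Matrix (Fin q) (Fin n) ℝ)
    (Q : Fin (N + 2) → Matrix (Fin p) (Fin p) ℝ)
    (R : Fin (N + 1) → Matrix (Fin q) (Fin q) ℝ)
    (y : Fin (N + 1) → Fin q → ℝ)
    (fh : Fin (N + 2) → Fin p → ℝ) (xh : Fin (N + 2) → Fin n → ℝ)
    (f : Fin (N + 2) → Fin p → ℝ) (x : Fin (N + 2) → Fin n → ℝ) : ℝ :=
  2 * (∑ j : Fin (N + 2), (Q j *ᵥ fh j) ⬝ᵥ f j)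
    - 2 * (∑ k : Fin (N + 1),
        (R k *ᵥ (y k - H k *ᵥ xh k.castSucc)) ⬝ᵥ (H k *ᵥ x k.castSucc))

lemma jfun_expand {N n p q : ℕ} (H : Fin (N + 1) → Matrix (Fin q) (Fin n) ℝ)
    (Q : Fin (N + 2) → Matrix (Fin p) (Fin p) ℝ)
    (R : Fin (N + 1) → Matrix (Fin q) (Fin q) ℝ)
    (y : Fin (N + 1) → Fin q → ℝ)
    (hQs : ∀ j, (Q j)ᵀ = Q j) (hRs : ∀ k, (R k)ᵀ = R k)
    (fh : Fin (N + 2) → Fin p → ℝ) (xh : Fin (N + 2) → Fin n → ℝ)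
    (f : Fin (N + 2) → Fin p → ℝ) (x : Fin (N + 2) → Fin n → ℝ) :
    Jfun H Q R y (fh + f) (xh + x)
      = Jfun H Q R y fh xh + Jfun H Q R (fun _ => 0) f x
        + Lterm H Q R y fh xh f x := by
  have h1 : ∀ j : Fin (N + 2),
      (Q j *ᵥ (fh + f) j) ⬝ᵥ (fh + f) j
        = (Q j *ᵥ fh j) ⬝ᵥ fh j + (Q j *ᵥ f j) ⬝ᵥ f j
          + 2 * ((Q j *ᵥ fh j) ⬝ᵥ f j) := fun j => by
    rw [Pi.add_apply]; exact quad_add _ (hQs j) _ _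
  have h2 : ∀ k : Fin (N + 1),
      (R k *ᵥ (y k - H k *ᵥ (xh + x) k.castSucc)) ⬝ᵥ
          (y k - H k *ᵥ (xh + x) k.castSucc)
        = (R k *ᵥ (y k - H k *ᵥ xh k.castSucc)) ⬝ᵥ (y k - H k *ᵥ xh k.castSucc)
          + (R k *ᵥ (H k *ᵥ x k.castSucc)) ⬝ᵥ (H k *ᵥ x k.castSucc)
          - 2 * ((R k *ᵥ (y k - H k *ᵥ xh k.castSucc)) ⬝ᵥ (H k *ᵥ x k.castSucc)) :=
    fun k => by
    have : y k - H k *ᵥ (xh + x) k.castSucc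
        = (y k - H k *ᵥ xh k.castSucc) - H k *ᵥ x k.castSucc := by
      rw [Pi.add_apply, mulVec_add]; abel
    rw [this]; exact quad_sub _ (hRs k) _ _
  have h3 : ∀ k : Fin (N + 1),
      (R k *ᵥ ((fun _ => (0 : Fin q → ℝ)) k - H k *ᵥ x k.castSucc)) ⬝ᵥ
          ((fun _ => (0 : Fin q → ℝ)) k - H k *ᵥ x k.castSucc)
        = (R k *ᵥ (H k *ᵥ x k.castSucc)) ⬝ᵥ (H k *ᵥ x k.castSucc) := fun k => by
    simp [zero_sub, mulVec_neg, neg_dotProduct, dotProduct_neg]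
  simp only [Jfun, Lterm, h1, h2, h3, Finset.sum_add_distrib, Finset.sum_sub_distrib,
    Finset.mul_sum]
  ring

lemma jfun0_nonneg {N n p q : ℕ} (H : Fin (N + 1) → Matrix (Fin q) (Fin n) ℝ)
    (Q : Fin (N + 2) → Matrix (Fin p) (Fin p) ℝ)
    (R : Fin (N + 1) → Matrix (Fin q) (Fin q) ℝ)
    (hQ : ∀ j, (Q j).PosDef) (hR : ∀ k, (R k).PosDef)
    (f : Fin (N + 2) → Fin p → ℝ) (x : Fin (N + 2) → Fin n → ℝ) :
    0 ≤ Jfun H Q R (fun _ => 0) f x := by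
  refine add_nonneg (Finset.sum_nonneg fun j _ => dot_sq_nonneg _ (hQ j) _)
    (Finset.sum_nonneg fun k _ => dot_sq_nonneg _ (hR k) _)

lemma jfun0_smul {N n p q : ℕ} (H : Fin (N + 1) → Matrix (Fin q) (Fin n) ℝ)
    (Q : Fin (N + 2) → Matrix (Fin p) (Fin p) ℝ)
    (R : Fin (N + 1) → Matrix (Fin q) (Fin q) ℝ) (t : ℝ)
    (f : Fin (N + 2) → Fin p → ℝ) (x : Fin (N + 2) → Fin n → ℝ) :
    Jfun H Q R (fun _ => 0) (t • f) (t • x)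
      = t ^ 2 * Jfun H Q R (fun _ => 0) f x := by
  simp only [Jfun, Pi.smul_apply, mulVec_smul, zero_sub, mulVec_neg, smul_neg,
    dotProduct_neg, neg_dotProduct, neg_neg, smul_dotProduct, dotProduct_smul,
    smul_eq_mul, Finset.mul_sum, mul_add]
  congr 1 <;> (apply Finset.sum_congr rfl; intro i _; ring)

lemma Lterm_smul {N n p q : ℕ} (H : Fin (N + 1) → Matrix (Fin q) (Fin n) ℝ)
    (Q : Fin (N + 2) → Matrix (Fin p) (Fin p) ℝ)
    (R : Fin (N + 1) → Matrix (Fin q) (Fin q) ℝ)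
    (y : Fin (N + 1) → Fin q → ℝ) (t : ℝ)
    (fh : Fin (N + 2) → Fin p → ℝ) (xh : Fin (N + 2) → Fin n → ℝ)
    (f : Fin (N + 2) → Fin p → ℝ) (x : Fin (N + 2) → Fin n → ℝ) :
    Lterm H Q R y fh xh (t • f) (t • x) = t * Lterm H Q R y fh xh f x := by
  simp only [Lterm, Pi.smul_apply, mulVec_smul, dotProduct_smul, smul_eq_mul,
    ← Finset.mul_sum]
  ring

lemma cross_zero (A Lv : ℝ) (hA : 0 ≤ A) (h : ∀ t : ℝ, 0 ≤ t ^ 2 * A + t * Lv) :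
    Lv = 0 := by
  have h1 := h (-Lv / (2 * A + 1))
  have hpos : (0 : ℝ) < 2 * A + 1 := by linarith
  rw [div_pow, neg_sq] at h1
  field_simp at h1
  nlinarith [sq_nonneg Lv, mul_nonneg hA (sq_nonneg Lv)]

set_option maxHeartbeats 1000000 in
/-- if `({x̂_k},{f̂_k}) ∈ 𝒩` minimizes `J_y` over `𝒩` with
`Ĵ = J_y({f̂_k},{x̂_k}) ≤ 1`, then
`{({x},{f}) ∈ 𝒩 : J_y ≤ 1} = ({x̂},{f̂}) + {({x},{f}) ∈ 𝒩 : J_0 ≤ 1 - Ĵ}`. -/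

theorem stmt9 {N m n p q : ℕ}
    (F : Fin (N + 2) → Matrix (Fin m) (Fin n) ℝ)
    (C : Fin (N + 1) → Matrix (Fin m) (Fin n) ℝ)
    (H : Fin (N + 1) → Matrix (Fin q) (Fin n) ℝ)
    (B : Fin (N + 2) → Matrix (Fin m) (Fin p) ℝ)
    (Q : Fin (N + 2) → Matrix (Fin p) (Fin p) ℝ)
    (R : Fin (N + 1) → Matrix (Fin q) (Fin q) ℝ)
    (y : Fin (N + 1) → Fin q → ℝ)
    (hQ : ∀ j, (Q j).PosDef) (hR : ∀ k, (R k).PosDef)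
    (xh : Fin (N + 2) → Fin n → ℝ) (fh : Fin (N + 2) → Fin p → ℝ)
    (hmem : (xh, fh) ∈ NSet F C B)
    (hmin : ∀ xf ∈ NSet F C B, Jfun H Q R y fh xh ≤ Jfun H Q R y xf.2 xf.1)
    (hJle : Jfun H Q R y fh xh ≤ 1) :
    {xf | xf ∈ NSet F C B ∧ Jfun H Q R y xf.2 xf.1 ≤ 1} =
      (fun xf => (xh + xf.1, fh + xf.2)) ''
        {xf | xf ∈ NSet F C B ∧
          Jfun H Q R (fun _ => 0) xf.2 xf.1 ≤ 1 - Jfun H Q R y fh xh} := by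
  have hQs : ∀ j, (Q j)ᵀ = Q j := fun j => by
    have := (hQ j).1; simpa [Matrix.IsHermitian] using this
  have hRs : ∀ k, (R k)ᵀ = R k := fun k => by
    have := (hR k).1; simpa [Matrix.IsHermitian] using this
  -- the cross term vanishes on NSet
  have hL0 : ∀ xf ∈ NSet F C B, Lterm H Q R y fh xh xf.2 xf.1 = 0 := by
    rintro ⟨x, f⟩ hxf
    have hAnn : 0 ≤ Jfun H Q R (fun _ => 0) f x := jfun0_nonneg H Q R hQ hR f x
    refine cross_zero _ _ hAnn ?_
    intro t
    have hmem2 : (xh + t • x, fh + t • f) ∈ NSet F C B :=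
      NSet_add hmem (NSet_smul t hxf)
    have hmin' : Jfun H Q R y fh xh ≤ Jfun H Q R y (fh + t • f) (xh + t • x) :=
      hmin (xh + t • x, fh + t • f) hmem2
    rw [jfun_expand H Q R y hQs hRs fh xh (t • f) (t • x),
      jfun0_smul, Lterm_smul] at hmin'
    linarith
  ext ⟨x', f'⟩
  simp only [Set.mem_setOf_eq, Set.mem_image, Prod.mk.injEq, Prod.exists]
  constructor
  · rintro ⟨hmN, hle⟩
    refine ⟨x' - xh, f' - fh, ⟨?_, ?_⟩, by abel, by abel⟩
    · have h1 : ((x', f').1 + (-1 : ℝ) • (xh, fh).1, (x', f').2 + (-1 : ℝ) • (xh, fh).2)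
          ∈ NSet F C B := NSet_add hmN (NSet_smul (-1) hmem)
      simpa [neg_one_smul, sub_eq_add_neg] using h1
    · have hmemd : ((x' - xh, f' - fh) : (Fin (N + 2) → Fin n → ℝ) × (Fin (N + 2) → Fin p → ℝ)) ∈ NSet F C B := by
        have h1 : ((x', f').1 + (-1 : ℝ) • (xh, fh).1, (x', f').2 + (-1 : ℝ) • (xh, fh).2)
            ∈ NSet F C B := NSet_add hmN (NSet_smul (-1) hmem)
        simpa [neg_one_smul, sub_eq_add_neg] using h1
      have hexp := jfun_expand H Q R y hQs hRs fh xh (f' - fh) (x' - xh)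
      rw [hL0 _ hmemd] at hexp
      have hx : xh + (x' - xh) = x' := by abel
      have hf : fh + (f' - fh) = f' := by abel
      rw [hx, hf] at hexp
      linarith
  · rintro ⟨x, f, ⟨hmN, hb⟩, hx, hf⟩
    subst hx hf
    have hmem2 : (xh + x, fh + f) ∈ NSet F C B := NSet_add hmem hmN
    refine ⟨hmem2, ?_⟩
    have hexp := jfun_expand H Q R y hQs hRs fh xh f x
    rw [hL0 _ hmN] at hexp
    rw [hexp]
    linarith
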